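/- Let p and p̃ be probability density functions of univariate real random variables, let Q_K be the probability mass function of the rank statistic A_K, and define d_K(p, p̃) = (1/(K+1)) · Σ_{n=0}^{K} |1/(K+1) − Q_K(n)|. Then d_K(p, p̃) ≥ 0 for all K, and d_K(p, p̃) = 0 for every K ∈ ℕ if and only if p = p̃ almost everywhere. -/

import Mathlib

open MeasureTheory

/-- The pmf of the rank statistic `A_K`:
`Q_K(n) = ∫ C(K,n) F̃(y)^n (1 - F̃(y))^{K-n} p(y) dy`, where `F̃` is the cdf of `p̃`. -/
noncomputable def rankPMF (p Ftilde : ℝ → ℝ) (K n : ℕ) : ℝ :=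
  ∫ y, (K.choose n : ℝ) * Ftilde y ^ n * (1 - Ftilde y) ^ (K - n) * p y

/-- The ISL discrepancy `d_K(p, p̃) = (1/(K+1)) Σ_{n=0}^K |1/(K+1) - Q_K(n)|`. -/
noncomputable def dISL (p Ftilde : ℝ → ℝ) (K : ℕ) : ℝ :=
  (1 / (K + 1 : ℝ)) *
    ∑ n ∈ Finset.range (K + 1), |1 / (K + 1 : ℝ) - rankPMF p Ftilde K n|

open MeasureTheory intervalIntegral Set Filter Topology
open scoped ENNReal NNReal

variable {ptilde Ftilde : ℝ → ℝ}

lemma F_mono (hpt_nonneg : ∀ x, 0 ≤ ptilde x) (hpt_int : Integrable ptilde)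
    (hF : ∀ y, Ftilde y = ∫ x in Set.Iic y, ptilde x) : Monotone Ftilde := by
  intro a b hab
  rw [hF a, hF b]
  exact setIntegral_mono_set hpt_int.integrableOn
    (Eventually.of_forall fun x => hpt_nonneg x)
    ((Iic_subset_Iic.mpr hab).eventuallyLE)

lemma F_nonneg (hpt_nonneg : ∀ x, 0 ≤ ptilde x)
    (hF : ∀ y, Ftilde y = ∫ x in Set.Iic y, ptilde x) : ∀ y, 0 ≤ Ftilde y := by
  intro y
  rw [hF y]
  exact setIntegral_nonneg measurableSet_Iic fun x _ => hpt_nonneg x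

lemma F_le_one (hpt_nonneg : ∀ x, 0 ≤ ptilde x) (hpt_int : Integrable ptilde)
    (hpt_one : ∫ x, ptilde x = 1)
    (hF : ∀ y, Ftilde y = ∫ x in Set.Iic y, ptilde x) : ∀ y, Ftilde y ≤ 1 := by
  intro y
  rw [hF y, ← hpt_one]
  exact setIntegral_le_integral hpt_int (Eventually.of_forall fun x => hpt_nonneg x)

lemma F_cont (hpt_int : Integrable ptilde)
    (hF : ∀ y, Ftilde y = ∫ x in Set.Iic y, ptilde x) : Continuous Ftilde := by
  have : Ftilde = fun y => (∫ x in Set.Iic (0:ℝ), ptilde x) + ∫ x in (0:ℝ)..y, ptilde x := by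
    funext y
    rw [hF y, ← integral_Iic_sub_Iic hpt_int.integrableOn hpt_int.integrableOn]
    ring
  rw [this]
  exact continuous_const.add (hpt_int.continuous_primitive 0)

lemma F_surj (hpt_nonneg : ∀ x, 0 ≤ ptilde x) (hpt_int : Integrable ptilde)
    (hpt_one : ∫ x, ptilde x = 1)
    (hF : ∀ y, Ftilde y = ∫ x in Set.Iic y, ptilde x) :
    ∀ r : ℝ, 0 < r → r < 1 → ∃ y, Ftilde y = r := by
  intro r hr0 hr1
  -- tendsto along -n to 0
  have hbot : Tendsto (fun n : ℕ => Ftilde (-(n:ℝ))) atTop (𝓝 0) := by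
    have h := tendsto_setIntegral_of_antitone (f := ptilde) (μ := volume)
      (s := fun n : ℕ => Iic (-(n:ℝ))) (fun n => measurableSet_Iic)
      (fun i j hij => Iic_subset_Iic.mpr (neg_le_neg (by exact_mod_cast hij)))
      ⟨0, hpt_int.integrableOn⟩
    have hempty : (⋂ n : ℕ, Iic (-(n:ℝ))) = ∅ := by
      ext x
      simp only [mem_iInter, mem_Iic, mem_empty_iff_false, iff_false, not_forall, not_le]
      obtain ⟨n, hn⟩ := exists_nat_gt (-x)
      exact ⟨n, by linarith⟩
    rw [hempty] at h
    simpa only [Measure.restrict_empty, integral_zero_measure, hF] using h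
  have htop : Tendsto (fun n : ℕ => Ftilde (n:ℝ)) atTop (𝓝 1) := by
    have h := tendsto_setIntegral_of_monotone (f := ptilde) (μ := volume)
      (s := fun n : ℕ => Iic ((n:ℝ))) (fun n => measurableSet_Iic)
      (fun i j hij => Iic_subset_Iic.mpr (Nat.cast_le.mpr hij))
      (by
        have huniv : (⋃ n : ℕ, Iic ((n:ℝ))) = univ := by
          ext x
          simp only [mem_iUnion, mem_Iic, mem_univ, iff_true]
          obtain ⟨n, hn⟩ := exists_nat_gt x
          exact ⟨n, hn.le⟩
        rw [huniv]
        exact hpt_int.integrableOn)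
    have huniv : (⋃ n : ℕ, Iic ((n:ℝ))) = univ := by
      ext x
      simp only [mem_iUnion, mem_Iic, mem_univ, iff_true]
      obtain ⟨n, hn⟩ := exists_nat_gt x
      exact ⟨n, hn.le⟩
    rw [huniv] at h
    simp only [Measure.restrict_univ, hpt_one] at h
    simpa only [hF] using h
  obtain ⟨na, hna⟩ := (hbot.eventually_lt_const hr0).exists
  obtain ⟨nb, hnb⟩ := (htop.eventually_const_lt hr1).exists
  set a : ℝ := min (-(na:ℝ)) (nb:ℝ) with ha
  have hFa : Ftilde a < r :=
    lt_of_le_of_lt (F_mono hpt_nonneg hpt_int hF (min_le_left _ _)) hna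
  have hab : a ≤ (nb:ℝ) := min_le_right _ _
  have := intermediate_value_Icc hab (F_cont hpt_int hF).continuousOn
  obtain ⟨y, _, hy⟩ := this ⟨hFa.le, hnb.le⟩
  exact ⟨y, hy⟩

variable {q : ℝ → ℝ}

lemma comp_int (hq_int : Integrable q)
    (hFc : Continuous Ftilde) (hF0 : ∀ y, 0 ≤ Ftilde y) (hF1 : ∀ y, Ftilde y ≤ 1)
    {g : ℝ → ℝ} (hg : Continuous g) :
    Integrable (fun y => g (Ftilde y) * q y) := by
  obtain ⟨M, hM⟩ := isCompact_Icc.exists_bound_of_continuousOn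
    (hg.continuousOn : ContinuousOn g (Icc (0:ℝ) 1))
  exact hq_int.bdd_mul ((hg.comp hFc).aestronglyMeasurable)
    (Eventually.of_forall fun y => hM (Ftilde y) ⟨hF0 y, hF1 y⟩)

lemma cdf_level (hpt_nonneg : ∀ x, 0 ≤ ptilde x) (hpt_int : Integrable ptilde)
    (hpt_one : ∫ x, ptilde x = 1)
    (hF : ∀ y, Ftilde y = ∫ x in Set.Iic y, ptilde x) :
    ∀ s : ℝ, 0 ≤ s → s < 1 → ∫ x in {y | Ftilde y ≤ s}, ptilde x = s := by
  intro s hs0 hs1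
  have hmono := F_mono hpt_nonneg hpt_int hF
  have upper : ∫ x in {y | Ftilde y ≤ s}, ptilde x ≤ s := by
    refine le_of_forall_pos_le_add fun ε hε => ?_
    set s' := min (s + ε) ((s+1)/2) with hs'
    have hss' : s < s' := lt_min (by linarith) (by linarith)
    have hs'1 : s' < 1 := lt_of_le_of_lt (min_le_right _ _) (by linarith)
    have hs'0 : 0 < s' := lt_of_le_of_lt hs0 hss'
    obtain ⟨y', hy'⟩ := F_surj hpt_nonneg hpt_int hpt_one hF s' hs'0 hs'1
    have hsub : {y | Ftilde y ≤ s} ⊆ Iic y' := by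
      intro x hx
      by_contra hxy
      simp only [mem_Iic, not_le] at hxy
      have := hmono hxy.le
      rw [hy'] at this
      exact absurd (le_trans this hx) (not_le.mpr hss')
    calc ∫ x in {y | Ftilde y ≤ s}, ptilde x
        ≤ ∫ x in Iic y', ptilde x := setIntegral_mono_set hpt_int.integrableOn
          (Eventually.of_forall fun x => hpt_nonneg x) hsub.eventuallyLE
      _ = Ftilde y' := (hF y').symm
      _ = s' := hy'
      _ ≤ s + ε := min_le_left _ _
  have lower : s ≤ ∫ x in {y | Ftilde y ≤ s}, ptilde x := by
    have hnn : 0 ≤ ∫ x in {y | Ftilde y ≤ s}, ptilde x :=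
      setIntegral_nonneg (measurableSet_le (F_cont hpt_int hF).measurable measurable_const)
        fun x _ => hpt_nonneg x
    refine le_of_forall_pos_le_add fun ε hε => ?_
    rcases le_or_gt (s - ε) 0 with hr | hr
    · linarith
    · obtain ⟨y, hy⟩ := F_surj hpt_nonneg hpt_int hpt_one hF (s - ε) hr (by linarith)
      have hsub : Iic y ⊆ {y | Ftilde y ≤ s} := by
        intro x hx
        have := hmono (mem_Iic.mp hx)
        rw [hy] at this
        simpa using le_trans this (by linarith)
      have : s - ε ≤ ∫ x in {y | Ftilde y ≤ s}, ptilde x := by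
        calc s - ε = Ftilde y := hy.symm
          _ = ∫ x in Iic y, ptilde x := hF y
          _ ≤ _ := setIntegral_mono_set hpt_int.integrableOn
            (Eventually.of_forall fun x => hpt_nonneg x) hsub.eventuallyLE
      linarith
  linarith

/-- Piecewise-linear bump: `1` on `(-∞, a]`, `0` on `[a+ε, ∞)`. -/
private noncomputable def ramp (a ε x : ℝ) : ℝ := min 1 (max 0 ((a + ε - x)/ε))

lemma ramp_continuous (a : ℝ) {ε : ℝ} (hε : 0 < ε) : Continuous (ramp a ε) :=
  continuous_const.min (continuous_const.max
    ((continuous_const.sub continuous_id).div_const ε))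

lemma ramp_nonneg (a ε x : ℝ) : 0 ≤ ramp a ε x :=
  le_min zero_le_one (le_max_left _ _)

lemma ramp_le_one (a ε x : ℝ) : ramp a ε x ≤ 1 := min_le_left _ _

lemma ramp_eq_one {a ε x : ℝ} (hε : 0 < ε) (h : x ≤ a) : ramp a ε x = 1 := by
  have hd : (1:ℝ) ≤ (a + ε - x)/ε := by
    rw [le_div_iff₀ hε]; linarith
  rw [ramp, max_eq_right (by linarith), min_eq_left hd]

lemma ramp_eq_zero {a ε x : ℝ} (hε : 0 < ε) (h : a + ε ≤ x) : ramp a ε x = 0 := by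
  have hd : (a + ε - x)/ε ≤ 0 := div_nonpos_of_nonpos_of_nonneg (by linarith) hε.le
  rw [ramp, max_eq_left hd, min_eq_right zero_le_one]

lemma level_q (hq_nonneg : ∀ x, 0 ≤ q x) (hq_int : Integrable q)
    (hpt_nonneg : ∀ x, 0 ≤ ptilde x) (hpt_int : Integrable ptilde)
    (hpt_one : ∫ x, ptilde x = 1)
    (hF : ∀ y, Ftilde y = ∫ x in Set.Iic y, ptilde x)
    (hJ : ∀ g : ℝ → ℝ, Continuous g →
      (∫ y, g (Ftilde y) * q y) = ∫ y, g (Ftilde y) * ptilde y) :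
    ∀ s : ℝ, 0 ≤ s → s < 1 → ∫ x in {y | Ftilde y ≤ s}, q x = s := by
  have hFc := F_cont hpt_int hF
  have hF0 := F_nonneg hpt_nonneg hF
  have hF1 := F_le_one hpt_nonneg hpt_int hpt_one hF
  have hA : ∀ t : ℝ, MeasurableSet {y | Ftilde y ≤ t} := fun t =>
    measurableSet_le hFc.measurable measurable_const
  intro s hs0 hs1
  have upper : ∫ x in {y | Ftilde y ≤ s}, q x ≤ s := by
    refine le_of_forall_pos_le_add fun ε hε => ?_
    set g := ramp s ε with hg
    have hgc := ramp_continuous s hε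
    have step1 : ∫ x in {y | Ftilde y ≤ s}, q x
        = ∫ x in {y | Ftilde y ≤ s}, g (Ftilde x) * q x :=
      (setIntegral_congr_fun (hA s) (fun x hx => by
        rw [hg, ramp_eq_one hε hx, one_mul])).symm
    have step2 : ∫ x in {y | Ftilde y ≤ s}, g (Ftilde x) * q x
        ≤ ∫ x, g (Ftilde x) * q x :=
      setIntegral_le_integral (comp_int hq_int hFc hF0 hF1 hgc)
        (Eventually.of_forall fun x =>
          mul_nonneg (ramp_nonneg _ _ _) (hq_nonneg x))
    have step4 : ∫ x, g (Ftilde x) * ptilde x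
        ≤ ∫ x, ({y | Ftilde y ≤ s + ε}.indicator ptilde) x := by
      refine integral_mono (comp_int hpt_int hFc hF0 hF1 hgc)
        (hpt_int.indicator (hA (s+ε))) fun x => ?_
      by_cases hx : Ftilde x ≤ s + ε
      · rw [Set.indicator_of_mem (show x ∈ {y | Ftilde y ≤ s + ε} from hx) ptilde]
        exact mul_le_of_le_one_left (hpt_nonneg x) (ramp_le_one _ _ _)
      · rw [Set.indicator_of_notMem (by simpa using hx) ptilde, hg,
          ramp_eq_zero hε (not_le.mp hx).le, zero_mul]
    rw [MeasureTheory.integral_indicator (hA (s+ε))] at step4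
    have step6 : ∫ x in {y | Ftilde y ≤ s + ε}, ptilde x ≤ s + ε := by
      rcases lt_or_ge (s + ε) 1 with h1 | h1
      · exact le_of_eq (cdf_level hpt_nonneg hpt_int hpt_one hF (s+ε) (by linarith) h1)
      · calc ∫ x in {y | Ftilde y ≤ s + ε}, ptilde x
            ≤ ∫ x, ptilde x := setIntegral_le_integral hpt_int
              (Eventually.of_forall fun x => hpt_nonneg x)
          _ = 1 := hpt_one
          _ ≤ s + ε := h1
    calc ∫ x in {y | Ftilde y ≤ s}, q x
        ≤ ∫ x, g (Ftilde x) * q x := step1 ▸ step2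
      _ = ∫ x, g (Ftilde x) * ptilde x := hJ g hgc
      _ ≤ s + ε := le_trans step4 step6
  have lower : s ≤ ∫ x in {y | Ftilde y ≤ s}, q x := by
    have hnn : 0 ≤ ∫ x in {y | Ftilde y ≤ s}, q x :=
      setIntegral_nonneg (hA s) fun x _ => hq_nonneg x
    refine le_of_forall_pos_le_add fun ε hε => ?_
    rcases le_or_gt s ε with h | h
    · linarith
    set g := ramp (s - ε) ε with hg
    have hgc := ramp_continuous (s - ε) hε
    have hge : s - ε + ε = s := by ring
    have step1 : ∫ x, g (Ftilde x) * q x ≤ ∫ x in {y | Ftilde y ≤ s}, q x := by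
      rw [← MeasureTheory.integral_indicator (hA s)]
      refine integral_mono (comp_int hq_int hFc hF0 hF1 hgc)
        (hq_int.indicator (hA s)) fun x => ?_
      by_cases hx : Ftilde x ≤ s
      · rw [Set.indicator_of_mem (show x ∈ {y | Ftilde y ≤ s} from hx) q]
        exact mul_le_of_le_one_left (hq_nonneg x) (ramp_le_one _ _ _)
      · rw [Set.indicator_of_notMem (by simpa using hx) q, hg,
          ramp_eq_zero hε (by rw [hge]; exact (not_le.mp hx).le), zero_mul]
    have step2 : ∫ x in {y | Ftilde y ≤ s - ε}, ptilde x ≤ ∫ x, g (Ftilde x) * ptilde x := by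
      rw [← MeasureTheory.integral_indicator (hA (s-ε))]
      refine integral_mono (hpt_int.indicator (hA (s-ε)))
        (comp_int hpt_int hFc hF0 hF1 hgc) fun x => ?_
      by_cases hx : Ftilde x ≤ s - ε
      · rw [Set.indicator_of_mem (show x ∈ {y | Ftilde y ≤ s - ε} from hx) ptilde, hg, ramp_eq_one hε hx, one_mul]
      · rw [Set.indicator_of_notMem (by simpa using hx) ptilde]
        exact mul_nonneg (ramp_nonneg _ _ _) (hpt_nonneg x)
    have hval : ∫ x in {y | Ftilde y ≤ s - ε}, ptilde x = s - ε :=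
      cdf_level hpt_nonneg hpt_int hpt_one hF (s-ε) (by linarith) (by linarith)
    have := hJ g hgc
    linarith
  linarith


open unitInterval in
lemma J_eq (hq_nonneg : ∀ x, 0 ≤ q x) (hq_int : Integrable q)
    (hq_one : ∫ x, q x = 1)
    (hpt_nonneg : ∀ x, 0 ≤ ptilde x) (hpt_int : Integrable ptilde)
    (hpt_one : ∫ x, ptilde x = 1)
    (hF : ∀ y, Ftilde y = ∫ x in Set.Iic y, ptilde x)
    (hQ : ∀ K n : ℕ, n ≤ K → rankPMF q Ftilde K n = 1 / (K + 1 : ℝ))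
    (hQt : ∀ K n : ℕ, n ≤ K → rankPMF ptilde Ftilde K n = 1 / (K + 1 : ℝ)) :
    ∀ g : ℝ → ℝ, Continuous g →
      (∫ y, g (Ftilde y) * q y) = ∫ y, g (Ftilde y) * ptilde y := by
  have hFc := F_cont hpt_int hF
  have hF0 := F_nonneg hpt_nonneg hF
  have hF1 := F_le_one hpt_nonneg hpt_int hpt_one hF
  set Fc : ℝ → I := fun y => ⟨Ftilde y, hF0 y, hF1 y⟩ with hFcdef
  have hFcI : Continuous Fc := hFc.subtype_mk _
  -- integrability of gc ∘ Fc * r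
  have hint : ∀ (gc : C(I, ℝ)) (r : ℝ → ℝ), Integrable r →
      Integrable (fun y => gc (Fc y) * r y) := by
    intro gc r hr
    exact hr.bdd_mul ((gc.continuous.comp hFcI).aestronglyMeasurable)
      (Eventually.of_forall fun y => gc.norm_coe_le_norm _)
  -- the J functional is bounded
  have hbound : ∀ (gc : C(I, ℝ)) (r : ℝ → ℝ), (∀ x, 0 ≤ r x) → Integrable r →
      (∫ x, r x = 1) → |∫ y, gc (Fc y) * r y| ≤ ‖gc‖ := by
    intro gc r hr0 hri hr1
    calc |∫ y, gc (Fc y) * r y| ≤ ∫ y, |gc (Fc y)| * |r y| := by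
          simpa [Real.norm_eq_abs, abs_mul] using
            MeasureTheory.norm_integral_le_integral_norm (fun y => gc (Fc y) * r y)
      _ ≤ ∫ y, ‖gc‖ * r y := by
          refine integral_mono (by simpa [abs_mul] using (hint gc r hri).abs)
            (hri.const_mul _) fun y => ?_
          rw [abs_of_nonneg (hr0 y)]
          exact mul_le_mul_of_nonneg_right (gc.norm_coe_le_norm _) (hr0 y)
      _ = ‖gc‖ := by rw [MeasureTheory.integral_const_mul, hr1, mul_one]
  -- Bernstein approximations have equal J against q and ptilde
  have hBA : ∀ (gc : C(I, ℝ)) (K : ℕ),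
      (∫ y, (bernsteinApproximation K gc) (Fc y) * q y)
        = ∫ y, (bernsteinApproximation K gc) (Fc y) * ptilde y := by
    intro gc K
    have expand : ∀ (r : ℝ → ℝ), Integrable r →
        (∀ n : ℕ, n ≤ K → rankPMF r Ftilde K n = 1 / (K + 1 : ℝ)) →
        (∫ y, (bernsteinApproximation K gc) (Fc y) * r y)
          = ∑ k : Fin (K + 1), gc (bernstein.z k) * (1 / (K + 1 : ℝ)) := by
      intro r hri hQr
      have e1 : (fun y => (bernsteinApproximation K gc) (Fc y) * r y)
          = fun y => ∑ k : Fin (K + 1), gc (bernstein.z k) *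
              ((K.choose k : ℝ) * Ftilde y ^ (k : ℕ) * (1 - Ftilde y) ^ (K - k) * r y) := by
        funext y
        rw [bernsteinApproximation]
        simp only [ContinuousMap.coe_sum, Finset.sum_apply, ContinuousMap.coe_smul, Pi.smul_apply,
          smul_eq_mul, Finset.sum_mul]
        congr 1
        funext k
        rw [ContinuousMap.mul_apply, ContinuousMap.const_apply, bernstein_apply]
        simp only [hFcdef]
        ring
      rw [e1, MeasureTheory.integral_finset_sum]
      · congr 1
        funext k
        rw [MeasureTheory.integral_const_mul]
        have hq := hQr k (Nat.lt_succ_iff.mp k.isLt)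
        rw [rankPMF] at hq
        rw [hq]
      · intro k _
        have : Integrable (fun y =>
            ((K.choose k : ℝ) * Ftilde y ^ (k : ℕ) * (1 - Ftilde y) ^ (K - k)) * r y) :=
          comp_int (g := fun x : ℝ => (K.choose (k:ℕ) : ℝ) * x ^ (k:ℕ) * (1 - x) ^ (K - (k:ℕ)))
            hri hFc hF0 hF1 (by continuity)
        have h2 := this.const_mul (gc (bernstein.z k))
        refine h2.congr (Eventually.of_forall fun y => ?_)
        ring
    rw [expand q hq_int (fun n hn => hQ K n hn), expand ptilde hpt_int (fun n hn => hQt K n hn)]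
  -- conclude for all continuous maps on I
  have main : ∀ gc : C(I, ℝ), (∫ y, gc (Fc y) * q y) = ∫ y, gc (Fc y) * ptilde y := by
    intro gc
    have hdiff : ∀ K : ℕ,
        |(∫ y, gc (Fc y) * q y) - ∫ y, gc (Fc y) * ptilde y|
          ≤ 2 * ‖gc - bernsteinApproximation K gc‖ := by
      intro K
      set h := bernsteinApproximation K gc with hh
      have e1 : (∫ y, gc (Fc y) * q y) - (∫ y, h (Fc y) * q y)
          = ∫ y, (gc - h) (Fc y) * q y := by
        rw [← integral_sub (hint gc q hq_int) (hint h q hq_int)]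
        congr 1; funext y
        simp [sub_mul]
      have e2 : (∫ y, gc (Fc y) * ptilde y) - (∫ y, h (Fc y) * ptilde y)
          = ∫ y, (gc - h) (Fc y) * ptilde y := by
        rw [← integral_sub (hint gc ptilde hpt_int) (hint h ptilde hpt_int)]
        congr 1; funext y
        simp [sub_mul]
      have b1 := hbound (gc - h) q hq_nonneg hq_int hq_one
      have b2 := hbound (gc - h) ptilde hpt_nonneg hpt_int hpt_one
      have hBAeq := hBA gc K
      rw [← hh] at hBAeq
      have : (∫ y, gc (Fc y) * q y) - ∫ y, gc (Fc y) * ptilde y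
          = (∫ y, (gc - h) (Fc y) * q y) - ∫ y, (gc - h) (Fc y) * ptilde y := by
        rw [← e1, ← e2, hBAeq]; ring
      rw [this]
      calc |(∫ y, (gc - h) (Fc y) * q y) - ∫ y, (gc - h) (Fc y) * ptilde y|
          ≤ |∫ y, (gc - h) (Fc y) * q y| + |∫ y, (gc - h) (Fc y) * ptilde y| := abs_sub _ _
        _ ≤ ‖gc - h‖ + ‖gc - h‖ := add_le_add b1 b2
        _ = 2 * ‖gc - h‖ := by ring
    have hto : Tendsto (fun K : ℕ => 2 * ‖gc - bernsteinApproximation K gc‖) atTop (𝓝 0) := by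
      have := bernsteinApproximation_uniform gc
      have h2 : Tendsto (fun K : ℕ => ‖gc - bernsteinApproximation K gc‖) atTop (𝓝 0) := by
        rw [tendsto_iff_norm_sub_tendsto_zero] at this
        simpa [norm_sub_rev] using this
      simpa using h2.const_mul 2
    have habs : |(∫ y, gc (Fc y) * q y) - ∫ y, gc (Fc y) * ptilde y| ≤ 0 :=
      ge_of_tendsto hto (Eventually.of_forall hdiff)
    have := abs_nonneg ((∫ y, gc (Fc y) * q y) - ∫ y, gc (Fc y) * ptilde y)
    have : |(∫ y, gc (Fc y) * q y) - ∫ y, gc (Fc y) * ptilde y| = 0 := le_antisymm habs this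
    have := abs_eq_zero.mp this
    linarith [this]
  intro g hg
  have := main ⟨fun x => g x.val, hg.comp continuous_subtype_val⟩
  simpa [hFcdef] using this

lemma iic_q (hq_nonneg : ∀ x, 0 ≤ q x) (hq_int : Integrable q)
    (hq_one : ∫ x, q x = 1)
    (hpt_nonneg : ∀ x, 0 ≤ ptilde x) (hpt_int : Integrable ptilde)
    (hpt_one : ∫ x, ptilde x = 1)
    (hF : ∀ y, Ftilde y = ∫ x in Set.Iic y, ptilde x)
    (hJ : ∀ g : ℝ → ℝ, Continuous g →
      (∫ y, g (Ftilde y) * q y) = ∫ y, g (Ftilde y) * ptilde y) :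
    ∀ y, ∫ x in Set.Iic y, q x = Ftilde y := by
  have hFc := F_cont hpt_int hF
  have hF0 := F_nonneg hpt_nonneg hF
  have hF1 := F_le_one hpt_nonneg hpt_int hpt_one hF
  have hmono := F_mono hpt_nonneg hpt_int hF
  have hlevel := level_q hq_nonneg hq_int hpt_nonneg hpt_int hpt_one hF hJ
  intro y
  set t := Ftilde y with hty
  have upper : ∫ x in Set.Iic y, q x ≤ t := by
    rcases lt_or_ge t 1 with h1 | h1
    · have hsub : Set.Iic y ⊆ {z | Ftilde z ≤ t} := fun x hx => hmono (mem_Iic.mp hx)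
      calc ∫ x in Set.Iic y, q x
          ≤ ∫ x in {z | Ftilde z ≤ t}, q x := setIntegral_mono_set hq_int.integrableOn
            (Eventually.of_forall fun x => hq_nonneg x) hsub.eventuallyLE
        _ = t := hlevel t (hF0 y) h1
    · calc ∫ x in Set.Iic y, q x ≤ ∫ x, q x :=
          setIntegral_le_integral hq_int (Eventually.of_forall fun x => hq_nonneg x)
        _ = 1 := hq_one
        _ ≤ t := h1
  have lower : t ≤ ∫ x in Set.Iic y, q x := by
    have hnn : 0 ≤ ∫ x in Set.Iic y, q x :=
      setIntegral_nonneg measurableSet_Iic fun x _ => hq_nonneg x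
    refine le_of_forall_pos_le_add fun ε hε => ?_
    rcases le_or_gt t ε with h | h
    · linarith
    have hs0 : 0 ≤ t - ε := by linarith
    have hs1 : t - ε < 1 := by linarith [hF1 y]
    have hsub : {z | Ftilde z ≤ t - ε} ⊆ Set.Iic y := by
      intro x hx
      by_contra hxy
      simp only [mem_Iic, not_le] at hxy
      have := hmono hxy.le
      have hx' : Ftilde x ≤ t - ε := hx
      rw [← hty] at this
      linarith
    have := hlevel (t - ε) hs0 hs1
    have hle : t - ε ≤ ∫ x in Set.Iic y, q x := by
      rw [← this]
      exact setIntegral_mono_set hq_int.integrableOn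
        (Eventually.of_forall fun x => hq_nonneg x) hsub.eventuallyLE
    linarith
  linarith

lemma beta_aux (m : ℕ) : ∀ n : ℕ, ∫ x in (0:ℝ)..1, x^n * (1-x)^m
    = 1 / (((n+m+1) : ℝ) * ((n+m).choose n : ℝ)) := by
  induction m with
  | zero =>
    intro n
    simp [integral_pow]
  | succ m ih =>
    intro n
    have hu : ∀ x ∈ uIcc (0:ℝ) 1, HasDerivAt (fun x : ℝ => x ^ (n+1)) (((n:ℝ)+1) * x ^ n) x := by
      intro x _
      simpa using hasDerivAt_pow (n+1) x
    have hv : ∀ x ∈ uIcc (0:ℝ) 1, HasDerivAt (fun x : ℝ => (1-x) ^ (m+1))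
        (-(((m:ℝ)+1) * (1-x) ^ m)) x := by
      intro x _
      have h1 : HasDerivAt (fun x : ℝ => 1 - x) (-1) x := by
        simpa using (hasDerivAt_id x).const_sub 1
      have := h1.fun_pow (m+1)
      simpa [mul_comm, mul_assoc] using this
    have hu' : IntervalIntegrable (fun x : ℝ => ((n:ℝ)+1) * x ^ n) volume 0 1 :=
      (continuous_const.mul (continuous_pow n)).intervalIntegrable 0 1
    have hv' : IntervalIntegrable (fun x : ℝ => -(((m:ℝ)+1) * (1-x) ^ m)) volume 0 1 := by
      apply Continuous.intervalIntegrable; continuity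
    have key := integral_deriv_mul_eq_sub hu hv hu' hv'
    have hI1 : IntervalIntegrable (fun x : ℝ => ((n:ℝ)+1) * x ^ n * (1-x)^(m+1)) volume 0 1 := by
      apply Continuous.intervalIntegrable; continuity
    have hI2 : IntervalIntegrable (fun x : ℝ => x ^ (n+1) * -(((m:ℝ)+1) * (1-x)^m)) volume 0 1 := by
      apply Continuous.intervalIntegrable; continuity
    rw [integral_add hI1 hI2] at key
    have h2 : ((n:ℝ)+1) * ∫ x in (0:ℝ)..1, x^n*(1-x)^(m+1)
        = ((m:ℝ)+1) * ∫ x in (0:ℝ)..1, x^(n+1)*(1-x)^m := by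
      have e1 : ∫ x in (0:ℝ)..1, ((n:ℝ)+1) * x ^ n * (1-x)^(m+1)
          = ((n:ℝ)+1) * ∫ x in (0:ℝ)..1, x^n*(1-x)^(m+1) := by
        rw [← intervalIntegral.integral_const_mul]; congr 1; ext x; ring
      have e2 : ∫ x in (0:ℝ)..1, x ^ (n+1) * -(((m:ℝ)+1) * (1-x)^m)
          = -(((m:ℝ)+1) * ∫ x in (0:ℝ)..1, x^(n+1)*(1-x)^m) := by
        rw [← intervalIntegral.integral_const_mul, ← intervalIntegral.integral_neg]; congr 1; ext x; ring
      rw [e1, e2] at key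
      simp at key
      linarith [key]
    rw [ih (n+1)] at h2
    set t := ∫ x in (0:ℝ)..1, x^n*(1-x)^(m+1) with ht
    have hni : (n+1) + m = n + m + 1 := by omega
    rw [hni] at h2
    have hni2 : n + (m+1) = n + m + 1 := by omega
    rw [hni2]
    set C0 : ℝ := ((n+m+1).choose n : ℝ) with hC0
    set C1 : ℝ := ((n+m+1).choose (n+1) : ℝ) with hC1
    have hchoose : C1 * ((n:ℝ)+1) = C0 * ((m:ℝ)+1) := by
      have h := Nat.choose_succ_right_eq (n+m+1) n
      have h3 : n + m + 1 - n = m + 1 := by omega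
      rw [h3] at h
      rw [hC0, hC1]
      exact_mod_cast congrArg (fun k : ℕ => (k : ℝ)) h
    have hC0pos : (0:ℝ) < C0 := by
      rw [hC0]; exact_mod_cast Nat.choose_pos (by omega)
    have hC1pos : (0:ℝ) < C1 := by
      rw [hC1]; exact_mod_cast Nat.choose_pos (by omega)
    have hne1 : ((n:ℝ)+1) ≠ 0 := by positivity
    have hne2 : ((n:ℝ)+(m:ℝ)+2) ≠ 0 := by positivity
    have hcast1 : ((n+1:ℕ):ℝ) + (m:ℝ) + 1 = (n:ℝ)+(m:ℝ)+2 := by push_cast; ring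
    rw [hcast1] at h2
    have hb' : ((n:ℝ)+1) * t * (((n:ℝ)+(m:ℝ)+2) * C1) = (m:ℝ)+1 := by
      rw [h2]
      field_simp
    have hcast2 : ((n:ℝ) + ((m:ℕ)+1:ℕ) + 1) = (n:ℝ)+(m:ℝ)+2 := by push_cast; ring
    rw [hcast2, eq_div_iff (by positivity)]
    apply mul_left_cancel₀ (show ((n:ℝ)+1)*C1 ≠ 0 by positivity)
    linear_combination C0 * hb' - hchoose

lemma bern_beta {K n : ℕ} (hn : n ≤ K) :
    ∫ x in (0:ℝ)..1, (K.choose n : ℝ) * x^n * (1-x)^(K-n) = 1/(K+1 : ℝ) := by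
  have h1 : ∫ x in (0:ℝ)..1, (K.choose n : ℝ) * x^n * (1-x)^(K-n)
      = (K.choose n : ℝ) * ∫ x in (0:ℝ)..1, x^n * (1-x)^(K-n) := by
    rw [← intervalIntegral.integral_const_mul]
    congr 1; funext x; ring
  rw [h1, beta_aux (K-n) n]
  have h2 : n + (K - n) = K := by omega
  rw [h2]
  have hpos : 0 < (K.choose n : ℝ) := by exact_mod_cast Nat.choose_pos hn
  field_simp
  rw [Nat.cast_sub hn]; ring

lemma Qt_val (hpt_nonneg : ∀ x, 0 ≤ ptilde x) (hpt_int : Integrable ptilde)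
    (hpt_one : ∫ x, ptilde x = 1)
    (hF : ∀ y, Ftilde y = ∫ x in Set.Iic y, ptilde x) :
    ∀ K n : ℕ, n ≤ K → rankPMF ptilde Ftilde K n = 1 / (K + 1 : ℝ) := by
  have hFc := F_cont hpt_int hF
  have hF0 := F_nonneg hpt_nonneg hF
  have hF1 := F_le_one hpt_nonneg hpt_int hpt_one hF
  set ν : Measure ℝ := volume.withDensity (fun x => ((ptilde x).toNNReal : ℝ≥0∞)) with hν
  have hlev := cdf_level hpt_nonneg hpt_int hpt_one hF
  have hofReal : ∀ {A : Set ℝ}, MeasurableSet A →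
      ν A = ENNReal.ofReal (∫ x in A, ptilde x) := by
    intro A hA
    rw [hν, withDensity_apply _ hA]
    exact (ofReal_integral_eq_lintegral_ofReal hpt_int.integrableOn
      (ae_restrict_of_ae (Eventually.of_forall fun x => hpt_nonneg x))).symm
  have hmap : Measure.map Ftilde ν = volume.restrict (Set.Icc 0 1) := by
    have hfin : IsFiniteMeasure (Measure.map Ftilde ν) := by
      constructor
      rw [Measure.map_apply hFc.measurable MeasurableSet.univ]
      simp only [Set.preimage_univ]
      rw [hofReal MeasurableSet.univ]
      simp [ENNReal.ofReal_lt_top]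
    refine Measure.ext_of_Iic _ _ fun s => ?_
    rw [Measure.map_apply hFc.measurable measurableSet_Iic]
    have hpre : Ftilde ⁻¹' (Set.Iic s) = {y | Ftilde y ≤ s} := rfl
    rw [hpre]
    rcases lt_or_ge s 0 with hs | hs
    · have he : {y | Ftilde y ≤ s} = (∅ : Set ℝ) := by
        ext x; simp only [mem_setOf_eq, mem_empty_iff_false, iff_false, not_le]
        exact lt_of_lt_of_le hs (hF0 x)
      rw [he]
      have : Set.Iic s ∩ Set.Icc (0:ℝ) 1 = ∅ := by
        ext x
        simp only [mem_inter_iff, mem_Iic, mem_Icc, mem_empty_iff_false, iff_false, not_and]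
        intro hxs
        intro h0
        linarith
      rw [Measure.restrict_apply measurableSet_Iic, this]
      simp
    rcases lt_or_ge s 1 with hs1 | hs1
    · have hA : MeasurableSet {y | Ftilde y ≤ s} :=
        measurableSet_le hFc.measurable measurable_const
      rw [hofReal hA, hlev s hs hs1]
      rw [Measure.restrict_apply measurableSet_Iic]
      have : Set.Iic s ∩ Set.Icc (0:ℝ) 1 = Set.Icc 0 s := by
        ext x
        simp only [mem_inter_iff, mem_Iic, mem_Icc]
        constructor
        · rintro ⟨h1, h2, h3⟩; exact ⟨h2, h1⟩
        · rintro ⟨h1, h2⟩; exact ⟨h2, h1, by linarith⟩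
      rw [this, Real.volume_Icc]
      simp
    · have he : {y | Ftilde y ≤ s} = Set.univ := by
        ext x; simp only [mem_setOf_eq, mem_univ, iff_true]
        exact le_trans (hF1 x) hs1
      rw [he, hofReal MeasurableSet.univ]
      rw [Measure.restrict_apply measurableSet_Iic]
      have : Set.Iic s ∩ Set.Icc (0:ℝ) 1 = Set.Icc 0 1 := by
        ext x
        simp only [mem_inter_iff, mem_Iic, mem_Icc]
        constructor
        · rintro ⟨h1, h2⟩; exact h2
        · rintro ⟨h1, h2⟩; exact ⟨by linarith, h1, h2⟩
      rw [this, Real.volume_Icc]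
      simp only [Measure.restrict_univ]
      rw [hpt_one]
      norm_num
  intro K n hn
  set B : ℝ → ℝ := fun x => (K.choose n : ℝ) * x^n * (1-x)^(K-n) with hB
  have hBc : Continuous B := by rw [hB]; continuity
  have e1 : rankPMF ptilde Ftilde K n = ∫ y, B (Ftilde y) * ptilde y := rfl
  have e2 : ∫ y, B (Ftilde y) * ptilde y = ∫ y, B (Ftilde y) ∂ν := by
    rw [hν, integral_withDensity_eq_integral_smul₀
      (hpt_int.aemeasurable.real_toNNReal) (fun y => B (Ftilde y))]
    congr 1
    funext y
    rw [NNReal.smul_def, smul_eq_mul, Real.coe_toNNReal _ (hpt_nonneg y)]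
    ring
  have e3 : ∫ y, B (Ftilde y) ∂ν = ∫ x, B x ∂(Measure.map Ftilde ν) :=
    (integral_map hFc.aemeasurable hBc.aestronglyMeasurable).symm
  rw [e1, e2, e3, hmap]
  have e4 : ∫ x in Set.Icc (0:ℝ) 1, B x = ∫ x in (0:ℝ)..1, B x := by
    rw [intervalIntegral.integral_of_le zero_le_one, MeasureTheory.integral_Icc_eq_integral_Ioc]
  rw [e4, hB]
  exact bern_beta hn

lemma dens_apply (hq_nonneg : ∀ x, 0 ≤ q x) (hq_int : Integrable q)
    {A : Set ℝ} (hA : MeasurableSet A) :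
    volume.withDensity (fun x => ((q x).toNNReal : ℝ≥0∞)) A
      = ENNReal.ofReal (∫ x in A, q x) := by
  rw [withDensity_apply _ hA]
  exact (ofReal_integral_eq_lintegral_ofReal hq_int.integrableOn
    (ae_restrict_of_ae (Eventually.of_forall fun x => hq_nonneg x))).symm

theorem main_thm
    (p : ℝ → ℝ)
    (hp_nonneg : ∀ x, 0 ≤ p x) (hp_int : Integrable p)
    (hp_one : ∫ x, p x = 1)
    (hpt_nonneg : ∀ x, 0 ≤ ptilde x) (hpt_int : Integrable ptilde)
    (hpt_one : ∫ x, ptilde x = 1)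
    (hF : ∀ y, Ftilde y = ∫ x in Set.Iic y, ptilde x) :
    (∀ K : ℕ, 0 ≤ (1 / (K + 1 : ℝ)) *
      ∑ n ∈ Finset.range (K + 1), |1 / (K + 1 : ℝ) - rankPMF p Ftilde K n|)
      ∧ ((∀ K : ℕ, (1 / (K + 1 : ℝ)) *
        ∑ n ∈ Finset.range (K + 1), |1 / (K + 1 : ℝ) - rankPMF p Ftilde K n| = 0)
          ↔ p =ᵐ[volume] ptilde) := by
  have hQt := Qt_val hpt_nonneg hpt_int hpt_one hF
  have hcpos : ∀ K : ℕ, (0:ℝ) < 1 / (K + 1 : ℝ) := fun K => by positivity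
  constructor
  · intro K
    exact mul_nonneg (hcpos K).le (Finset.sum_nonneg fun n _ => abs_nonneg _)
  constructor
  · -- forward direction
    intro h
    have hQ : ∀ K n : ℕ, n ≤ K → rankPMF p Ftilde K n = 1 / (K + 1 : ℝ) := by
      intro K n hn
      have hK := h K
      have hsum : ∑ n ∈ Finset.range (K + 1), |1 / (K + 1 : ℝ) - rankPMF p Ftilde K n| = 0 := by
        rcases mul_eq_zero.mp hK with h' | h'
        · exact absurd h' (hcpos K).ne'
        · exact h'
      have := (Finset.sum_eq_zero_iff_of_nonneg fun n _ => abs_nonneg _).mp hsum n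
        (Finset.mem_range.mpr (Nat.lt_succ_of_le hn))
      have := abs_eq_zero.mp this
      linarith
    have hJ := J_eq hp_nonneg hp_int hp_one hpt_nonneg hpt_int hpt_one hF hQ hQt
    have hIic := iic_q hp_nonneg hp_int hp_one hpt_nonneg hpt_int hpt_one hF hJ
    have hmeas : volume.withDensity (fun x => ((p x).toNNReal : ℝ≥0∞))
        = volume.withDensity (fun x => ((ptilde x).toNNReal : ℝ≥0∞)) := by
      have hfin : IsFiniteMeasure (volume.withDensity (fun x => ((p x).toNNReal : ℝ≥0∞))) := by
        constructor
        rw [dens_apply hp_nonneg hp_int MeasurableSet.univ]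
        exact ENNReal.ofReal_lt_top
      refine Measure.ext_of_Iic _ _ fun y => ?_
      rw [dens_apply hp_nonneg hp_int measurableSet_Iic,
        dens_apply hpt_nonneg hpt_int measurableSet_Iic]
      congr 1
      rw [hIic y, hF y]
    have hae := (withDensity_eq_iff_of_sigmaFinite
      (hp_int.aemeasurable.real_toNNReal.coe_nnreal_ennreal)
      (hpt_int.aemeasurable.real_toNNReal.coe_nnreal_ennreal)).mp hmeas
    filter_upwards [hae] with x hx
    have : (p x).toNNReal = (ptilde x).toNNReal := by exact_mod_cast hx
    rwa [Real.toNNReal_eq_toNNReal_iff (hp_nonneg x) (hpt_nonneg x)] at this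
  · -- backward direction
    intro h K
    have hQeq : ∀ n : ℕ, n ≤ K → rankPMF p Ftilde K n = 1 / (K + 1 : ℝ) := by
      intro n hn
      have : rankPMF p Ftilde K n = rankPMF ptilde Ftilde K n := by
        apply MeasureTheory.integral_congr_ae
        filter_upwards [h] with x hx
        rw [hx]
      rw [this]
      exact hQt K n hn
    have : ∑ n ∈ Finset.range (K + 1), |1 / (K + 1 : ℝ) - rankPMF p Ftilde K n| = 0 := by
      apply Finset.sum_eq_zero
      intro n hn
      rw [hQeq n (Nat.lt_succ_iff.mp (Finset.mem_range.mp hn))]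
      simp
    rw [this, mul_zero]

/-- **`d_K` is a divergence.** For probability densities `p, p̃` on `ℝ` (with `F̃` the
cdf of `p̃`), we have `d_K(p, p̃) ≥ 0` for all `K`, and `d_K(p, p̃) = 0` for every
`K ∈ ℕ` if and only if `p = p̃` almost everywhere. -/
theorem dISL_nonneg_and_eq_zero_iff_ae_eq
    (p ptilde : ℝ → ℝ) (Ftilde : ℝ → ℝ)
    (hp_nonneg : ∀ x, 0 ≤ p x) (hp_int : Integrable p)
    (hp_one : ∫ x, p x = 1)
    (hpt_nonneg : ∀ x, 0 ≤ ptilde x) (hpt_int : Integrable ptilde)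
    (hpt_one : ∫ x, ptilde x = 1)
    (hF : ∀ y, Ftilde y = ∫ x in Set.Iic y, ptilde x) :
    (∀ K : ℕ, 0 ≤ dISL p Ftilde K)
      ∧ ((∀ K : ℕ, dISL p Ftilde K = 0) ↔ p =ᵐ[volume] ptilde) := by
  have h := main_thm p hp_nonneg hp_int hp_one hpt_nonneg hpt_int hpt_one hF
  simpa [dISL] using h
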